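/- The gradient of the RankSVM surrogate is not decomposable over single coordinates of the relevance vector: for m = 3, there is no collection of functions h_1, h_2, h_3 with h_i depending only on R_i (and on s) such that ∇_s φ_svm(s, R) = h_1(R_1) + h_2(R_2) + h_3(R_3) for all binary relevance vectors R ∈ {0,1}³ and all score vectors s. In particular, taking s = (1,0,0), the coefficient 𝟙(R_2 > R_1) + 𝟙(R_3 > R_1) of e_1 in ∇_s φ_svm(s, R) is not a function of R_1 alone. -/

import Mathlib

open Finset

/-- Gradient of the RankSVM surrogate
`φ_svm(s,R) = ∑_{i≠j} 𝟙(R_i > R_j) max(0, 1 + s_j − s_i)` with respect to `s`. -/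
noncomputable def gradSvm (s R : Fin 3 → ℝ) : Fin 3 → ℝ :=
  ∑ i : Fin 3, ∑ j : Fin 3,
    if i ≠ j ∧ R i > R j ∧ 1 + s j > s i
    then (Pi.single j (1 : ℝ) - Pi.single i (1 : ℝ)) else 0

/-- The gradient of the RankSVM surrogate (for `m = 3`) cannot be decomposed
over single coordinates of the relevance vector: there are no functions
`h_i`, with `h_i` depending only on `s` and `R_i`, such that
`∇_s φ_svm(s,R) = h_1(R_1) + h_2(R_2) + h_3(R_3)` for all binary `R` and all `s`. -/
theorem stmt_6 :
    ¬ ∃ h : (Fin 3 → ℝ) → Fin 3 → ℝ → (Fin 3 → ℝ),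
      ∀ s : Fin 3 → ℝ, ∀ R : Fin 3 → ℝ, (∀ i, R i = 0 ∨ R i = 1) →
        gradSvm s R = ∑ i : Fin 3, h s i (R i) := by
  rintro ⟨h, H⟩
  set s : Fin 3 → ℝ := ![1, 0, 0] with hs
  have h1 := congrFun (H s ![0, 0, 0] (by intro i; fin_cases i <;> norm_num)) 0
  have h2 := congrFun (H s ![1, 1, 0] (by intro i; fin_cases i <;> norm_num)) 0
  have h3 := congrFun (H s ![0, 1, 0] (by intro i; fin_cases i <;> norm_num)) 0
  have h4 := congrFun (H s ![1, 0, 0] (by intro i; fin_cases i <;> norm_num)) 0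
  simp only [gradSvm, Finset.sum_apply, Fin.sum_univ_three, Pi.add_apply, ite_apply] at h1 h2 h3 h4
  simp [gradSvm, Fin.sum_univ_three, hs, Pi.single_apply] at h1 h2 h3 h4
  norm_num at h1 h2 h3 h4
  linarith
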